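/- For N even, there exists an assignment σ_a^{(i)} ∈ {−1,+1} with ∑_{i=1}^N σ_a^{(i)} = 0 for every a ∈ {0,…,k−1}, for which B = (2/k)∑_{a,b}∑_{i≠j} σ_a^{(i)}σ_b^{(j)} cos(π(a−b)/k) achieves the value −2N/(k sin²(π/(2k))). -/

import Mathlib

open Real

lemma sin_half_pos {k : ℕ} (hk : 3 ≤ k) : 0 < Real.sin (π / (2 * k)) := by
  have hk0 : (0:ℝ) < k := by positivity
  have hk3 : (3:ℝ) ≤ k := by exact_mod_cast hk
  apply Real.sin_pos_of_pos_of_lt_pi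
  · positivity
  · have : (1:ℝ) < 2 * k := by nlinarith
    calc π / (2 * k) < π / 1 := by
          apply div_lt_div_of_pos_left Real.pi_pos one_pos this
      _ = π := by ring

lemma sum_cos_eq {k : ℕ} (hk : 3 ≤ k) :
    ∑ a ∈ Finset.range k, Real.cos (π * a / k) = 1 := by
  have hs := sin_half_pos hk
  have hk0 : (k:ℝ) ≠ 0 := by positivity
  have key : ∀ a : ℕ, Real.sin ((2*(a:ℝ)+1)*π/(2*k)) - Real.sin ((2*(a:ℝ)-1)*π/(2*k))
      = 2 * Real.sin (π/(2*k)) * Real.cos (π * a / k) := by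
    intro a
    rw [Real.sin_sub_sin]
    have h1 : ((2*(a:ℝ)+1)*π/(2*k) - (2*(a:ℝ)-1)*π/(2*k))/2 = π/(2*k) := by
      field_simp; ring
    have h2 : ((2*(a:ℝ)+1)*π/(2*k) + (2*(a:ℝ)-1)*π/(2*k))/2 = π * a / k := by
      field_simp; ring
    rw [h1, h2]
  have tele : ∑ a ∈ Finset.range k,
      (Real.sin ((2*(a:ℝ)+1)*π/(2*k)) - Real.sin ((2*(a:ℝ)-1)*π/(2*k)))
      = Real.sin ((2*(k:ℝ)-1)*π/(2*k)) - Real.sin ((2*(0:ℝ)-1)*π/(2*k)) := by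
    have := Finset.sum_range_sub (fun a : ℕ => Real.sin ((2*(a:ℝ)-1)*π/(2*k))) k
    simp only [Nat.cast_add, Nat.cast_one, Nat.cast_zero] at this
    rw [← this]
    apply Finset.sum_congr rfl
    intro a _
    ring_nf
  have hfk : Real.sin ((2*(k:ℝ)-1)*π/(2*k)) = Real.sin (π/(2*k)) := by
    have : (2*(k:ℝ)-1)*π/(2*k) = π - π/(2*k) := by field_simp
    rw [this, Real.sin_pi_sub]
  have hf0 : Real.sin ((2*(0:ℝ)-1)*π/(2*k)) = -Real.sin (π/(2*k)) := by
    have : (2*(0:ℝ)-1)*π/(2*k) = -(π/(2*k)) := by field_simp; norm_num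
    rw [this, Real.sin_neg]
  have : 2 * Real.sin (π/(2*k)) * ∑ a ∈ Finset.range k, Real.cos (π * a / k)
      = 2 * Real.sin (π/(2*k)) := by
    rw [Finset.mul_sum]
    calc ∑ a ∈ Finset.range k, 2 * Real.sin (π/(2*k)) * Real.cos (π * a / k)
        = ∑ a ∈ Finset.range k,
          (Real.sin ((2*(a:ℝ)+1)*π/(2*k)) - Real.sin ((2*(a:ℝ)-1)*π/(2*k))) := by
          exact Finset.sum_congr rfl fun a _ => (key a).symm
      _ = _ := tele
      _ = 2 * Real.sin (π/(2*k)) := by rw [hfk, hf0]; ring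
  have h2s : 2 * Real.sin (π/(2*k)) ≠ 0 := by positivity
  exact mul_left_cancel₀ h2s (by rw [mul_one]; exact this)

lemma sum_sin_eq {k : ℕ} (hk : 3 ≤ k) :
    ∑ a ∈ Finset.range k, Real.sin (π * a / k)
      = Real.cos (π/(2*k)) / Real.sin (π/(2*k)) := by
  have hs := sin_half_pos hk
  have hk0 : (k:ℝ) ≠ 0 := by positivity
  have key : ∀ a : ℕ, (- Real.cos ((2*(a:ℝ)+1)*π/(2*k))) - (- Real.cos ((2*(a:ℝ)-1)*π/(2*k)))
      = 2 * Real.sin (π/(2*k)) * Real.sin (π * a / k) := by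
    intro a
    have : (- Real.cos ((2*(a:ℝ)+1)*π/(2*k))) - (- Real.cos ((2*(a:ℝ)-1)*π/(2*k)))
        = -(Real.cos ((2*(a:ℝ)+1)*π/(2*k)) - Real.cos ((2*(a:ℝ)-1)*π/(2*k))) := by ring
    rw [this, Real.cos_sub_cos]
    have h1 : ((2*(a:ℝ)+1)*π/(2*k) - (2*(a:ℝ)-1)*π/(2*k))/2 = π/(2*k) := by
      field_simp; ring
    have h2 : ((2*(a:ℝ)+1)*π/(2*k) + (2*(a:ℝ)-1)*π/(2*k))/2 = π * a / k := by
      field_simp; ring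
    rw [h1, h2]; ring
  have tele : ∑ a ∈ Finset.range k,
      ((- Real.cos ((2*(a:ℝ)+1)*π/(2*k))) - (- Real.cos ((2*(a:ℝ)-1)*π/(2*k))))
      = (- Real.cos ((2*(k:ℝ)-1)*π/(2*k))) - (- Real.cos ((2*(0:ℝ)-1)*π/(2*k))) := by
    have := Finset.sum_range_sub (fun a : ℕ => - Real.cos ((2*(a:ℝ)-1)*π/(2*k))) k
    simp only [Nat.cast_add, Nat.cast_one, Nat.cast_zero] at this
    rw [← this]
    apply Finset.sum_congr rfl
    intro a _
    ring_nf
  have hfk : Real.cos ((2*(k:ℝ)-1)*π/(2*k)) = -Real.cos (π/(2*k)) := by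
    have : (2*(k:ℝ)-1)*π/(2*k) = π - π/(2*k) := by field_simp
    rw [this, Real.cos_pi_sub]
  have hf0 : Real.cos ((2*(0:ℝ)-1)*π/(2*k)) = Real.cos (π/(2*k)) := by
    have : (2*(0:ℝ)-1)*π/(2*k) = -(π/(2*k)) := by field_simp; norm_num
    rw [this, Real.cos_neg]
  have : 2 * Real.sin (π/(2*k)) * ∑ a ∈ Finset.range k, Real.sin (π * a / k)
      = 2 * Real.cos (π/(2*k)) := by
    rw [Finset.mul_sum]
    calc ∑ a ∈ Finset.range k, 2 * Real.sin (π/(2*k)) * Real.sin (π * a / k)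
        = ∑ a ∈ Finset.range k,
          ((- Real.cos ((2*(a:ℝ)+1)*π/(2*k))) - (- Real.cos ((2*(a:ℝ)-1)*π/(2*k)))) := by
          exact Finset.sum_congr rfl fun a _ => (key a).symm
      _ = _ := tele
      _ = 2 * Real.cos (π/(2*k)) := by rw [hfk, hf0]; ring
  have hsne : Real.sin (π/(2*k)) ≠ 0 := ne_of_gt hs
  rw [eq_div_iff hsne]
  linear_combination this / 2

/-- For `N` even and `k ≥ 3`, there is a sign assignment `σ_a⁽ⁱ⁾ ∈ {±1}` with
`∑_i σ_a⁽ⁱ⁾ = 0` for every setting `a`, whose Bell value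
`B = (2/k) ∑_{a,b} ∑_{i≠j} σ_a⁽ⁱ⁾ σ_b⁽ʲ⁾ cos(π(a-b)/k)` equals
`-2N/(k sin²(π/(2k)))`. -/
theorem exists_balanced_strategy_attaining_classical_bound
    (N k : ℕ) (hN : 2 ≤ N) (hNeven : Even N) (hk : 3 ≤ k) :
    ∃ σ : Fin N → Fin k → ℝ,
      (∀ i a, σ i a = 1 ∨ σ i a = -1) ∧
      (∀ a : Fin k, (∑ i : Fin N, σ i a) = 0) ∧
      (2 / (k : ℝ)) * (∑ a : Fin k, ∑ b : Fin k, ∑ i : Fin N, ∑ j : Fin N,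
          if i ≠ j then σ i a * σ j b * Real.cos (π * ((a : ℝ) - (b : ℝ)) / k) else 0)
        = -(2 * (N : ℝ)) / ((k : ℝ) * Real.sin (π / (2 * k)) ^ 2) := by
  obtain ⟨m, hm⟩ := hNeven
  have hmN : N = 2 * m := by omega
  set τ : Fin N → ℝ := fun i => if (i : ℕ) < m then 1 else -1 with hτ
  have hbal : ∑ i : Fin N, τ i = 0 := by
    have h0 : ∑ i : Fin N, τ i = ∑ i ∈ Finset.range N, (if i < m then (1:ℝ) else -1) := by
      rw [← Fin.sum_univ_eq_sum_range]
    rw [h0, Finset.range_eq_Ico,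
      ← Finset.sum_Ico_consecutive _ (Nat.zero_le m) (by omega : m ≤ N)]
    have h1 : ∑ i ∈ Finset.Ico 0 m, (if i < m then (1:ℝ) else -1) = m := by
      rw [Finset.sum_congr rfl
        (fun i hi => if_pos (Finset.mem_Ico.mp hi).2)]
      simp
    have h2 : ∑ i ∈ Finset.Ico m N, (if i < m then (1:ℝ) else -1) = -(m:ℝ) := by
      rw [Finset.sum_congr rfl
        (fun i hi => if_neg (by have := (Finset.mem_Ico.mp hi).1; omega))]
      rw [Finset.sum_const, Nat.card_Ico]
      have : N - m = m := by omega
      rw [this]; simp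
    rw [h1, h2]; ring
  refine ⟨fun i _ => τ i, fun i a => by by_cases h : (i:ℕ) < m <;> simp [hτ, h],
    fun a => hbal, ?_⟩
  have hτsq : ∀ i : Fin N, τ i * τ i = 1 := by
    intro i; by_cases h : (i:ℕ) < m <;> simp [hτ, h]
  -- inner double sum
  have inner : ∀ c : ℝ, (∑ i : Fin N, ∑ j : Fin N,
      if i ≠ j then τ i * τ j * c else 0) = -(N : ℝ) * c := by
    intro c
    have step : ∀ i : Fin N, (∑ j : Fin N, if i ≠ j then τ i * τ j * c else 0)
        = τ i * c * (∑ j : Fin N, τ j) - τ i * τ i * c := by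
      intro i
      have h3 : ∀ j : Fin N, (if i ≠ j then τ i * τ j * c else 0)
          = τ i * τ j * c - (if i = j then τ i * τ j * c else 0) := by
        intro j; by_cases h : i = j <;> simp [h]
      rw [Finset.sum_congr rfl (fun j _ => h3 j), Finset.sum_sub_distrib,
        Finset.sum_ite_eq]
      simp only [Finset.mem_univ, if_true]
      have h4 : ∑ x : Fin N, τ i * τ x * c = τ i * c * ∑ j : Fin N, τ j := by
        rw [Finset.mul_sum]
        exact Finset.sum_congr rfl fun j _ => by ring
      rw [h4]
    rw [Finset.sum_congr rfl (fun i _ => step i), Finset.sum_sub_distrib]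
    simp only [hbal, mul_zero, Finset.sum_const_zero, zero_sub]
    rw [Finset.sum_congr rfl (fun i _ => by rw [hτsq i])]
    simp
  have hk0 : (k:ℝ) ≠ 0 := by positivity
  have hs := sin_half_pos hk
  have hsne : Real.sin (π/(2*(k:ℝ))) ≠ 0 := ne_of_gt hs
  set C : ℝ := ∑ a : Fin k, Real.cos (π * (a:ℝ) / k) with hC
  set S : ℝ := ∑ a : Fin k, Real.sin (π * (a:ℝ) / k) with hS
  have hCval : C = 1 := by
    rw [hC, Fin.sum_univ_eq_sum_range (fun a => Real.cos (π * (a:ℝ) / k))]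
    exact sum_cos_eq hk
  have hSval : S = Real.cos (π/(2*k)) / Real.sin (π/(2*k)) := by
    rw [hS, Fin.sum_univ_eq_sum_range (fun a => Real.sin (π * (a:ℝ) / k))]
    exact sum_sin_eq hk
  have hcos : ∀ a b : Fin k, Real.cos (π * ((a:ℝ) - (b:ℝ)) / k)
      = Real.cos (π * (a:ℝ) / k) * Real.cos (π * (b:ℝ) / k)
        + Real.sin (π * (a:ℝ) / k) * Real.sin (π * (b:ℝ) / k) := by
    intro a b
    have h5 : π * ((a:ℝ) - (b:ℝ)) / k = π * (a:ℝ) / k - π * (b:ℝ) / k := by ring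
    rw [h5, Real.cos_sub]
  have hT : (∑ a : Fin k, ∑ b : Fin k, Real.cos (π * ((a:ℝ) - (b:ℝ)) / k))
      = C * C + S * S := by
    simp_rw [hcos, Finset.sum_add_distrib, ← Finset.mul_sum]
    rw [← hC, ← hS, ← Finset.sum_mul, ← Finset.sum_mul, ← hC, ← hS]
  calc (2 / (k : ℝ)) * (∑ a : Fin k, ∑ b : Fin k, ∑ i : Fin N, ∑ j : Fin N,
        if i ≠ j then τ i * τ j * Real.cos (π * ((a : ℝ) - (b : ℝ)) / k) else 0)
      = (2 / (k : ℝ)) * (∑ a : Fin k, ∑ b : Fin k,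
          -(N:ℝ) * Real.cos (π * ((a : ℝ) - (b : ℝ)) / k)) := by
        congr 1
        exact Finset.sum_congr rfl fun a _ => Finset.sum_congr rfl fun b _ => inner _
    _ = (2 / (k : ℝ)) * (-(N:ℝ)) * (∑ a : Fin k, ∑ b : Fin k,
          Real.cos (π * ((a : ℝ) - (b : ℝ)) / k)) := by
        simp_rw [← Finset.mul_sum]; ring
    _ = (2 / (k : ℝ)) * (-(N:ℝ)) * (C * C + S * S) := by rw [hT]
    _ = -(2 * (N : ℝ)) / ((k : ℝ) * Real.sin (π / (2 * k)) ^ 2) := by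
        rw [hCval, hSval]
        have hpyth := Real.sin_sq_add_cos_sq (π/(2*(k:ℝ)))
        have h6 : (1:ℝ)*1 + (Real.cos (π/(2*(k:ℝ))) / Real.sin (π/(2*(k:ℝ))))
            * (Real.cos (π/(2*(k:ℝ))) / Real.sin (π/(2*(k:ℝ))))
            = 1 / Real.sin (π/(2*(k:ℝ)))^2 := by
          field_simp
          linear_combination hpyth
        rw [h6]
        field_simp
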